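/- The discretized test operator is almost passed by the weighted graph state: ⟨G|Ω_h(𝒜)|G⟩ ≥ (1 − sin²(π/(4h)))^{max_{1≤l≤m} |A_l|}. -/

import Mathlib

open scoped BigOperators ComplexOrder
open Matrix Complex

noncomputable section

/-- Computational-basis index set of `(ℂ²)^{⊗n}`. -/
abbrev QIdx (n : ℕ) := Fin n → Fin 2

/-- Linear operators on `(ℂ²)^{⊗n}`, represented as matrices. -/
abbrev QOp (n : ℕ) := Matrix (QIdx n) (QIdx n) ℂ

/-- A bit viewed as a real number. -/
def bR (b : Fin 2) : ℝ := (b : ℕ)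

/-- The ℓ²→ℓ² operator norm of a matrix. -/
noncomputable def opNorm {ι : Type*} [Fintype ι] [DecidableEq ι] (M : Matrix ι ι ℂ) : ℝ :=
  ‖Matrix.toEuclideanCLM (𝕜 := ℂ) M‖

/-- The weighted graph state `|G⟩`, as amplitudes
`⟨z|G⟩ = 2^{-n/2} ∏_{j<k} e^{i θ_{jk} z_j z_k}` (for symmetric `θ`,
`∑_{j<k} = (1/2) ∑_{j,k}`). -/
noncomputable def gVec (n : ℕ) (θ : Fin n → Fin n → ℝ) : QIdx n → ℂ :=
  fun z => ((Real.sqrt (2 ^ n))⁻¹ : ℝ) *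
    Complex.exp (Complex.I * ((1 / 2 * ∑ j, ∑ k, θ j k * bR (z j) * bR (z k) : ℝ) : ℂ))

/-- The rank-one projection `|G⟩⟨G|`. -/
noncomputable def gProj (n : ℕ) (θ : Fin n → Fin n → ℝ) : QOp n :=
  Matrix.vecMulVec (gVec n θ) (star (gVec n θ))

/-- `α_k(z) = ∑_{j ∈ C_k} θ_{jk} z_j` (using `θ_{jk} = 0` on non-edges). -/
noncomputable def alphaAngle (n : ℕ) (θ : Fin n → Fin n → ℝ) (k : Fin n) (z : QIdx n) : ℝ :=
  ∑ j, θ j k * bR (z j)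

/-- The discretization `α ↦ α^h`, the unique point `jπ/h` with
`jπ/h - π/(2h) ≤ α < jπ/h + π/(2h)`. -/
noncomputable def alphaH (h : ℕ) (α : ℝ) : ℝ :=
  (⌊(h : ℝ) * α / Real.pi + 1 / 2⌋ : ℤ) * Real.pi / h

/-- Matrix entry `⟨b|α⟩⟨α|b'⟩ = (1/2) e^{iα(b-b')}` of the projection onto
`|α⟩ = (|0⟩ + e^{iα}|1⟩)/√2`. -/
noncomputable def phaseFac (α : ℝ) (b b' : Fin 2) : ℂ :=
  (1 / 2 : ℂ) * Complex.exp (Complex.I * ((α * (bR b - bR b') : ℝ) : ℂ))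

/-- The projection `P_l = ∏_{k ∈ A_l} Q_k`, written out entrywise:
`P_l = ∑_z (⊗_{k∈A_l} |α_k(z)⟩⟨α_k(z)|) ⊗ |z⟩⟨z|_{A_l^c}`. -/
noncomputable def Pop (n : ℕ) (θ : Fin n → Fin n → ℝ) (A : Finset (Fin n)) : QOp n :=
  Matrix.of fun x y =>
    if ∀ j ∉ A, x j = y j then ∏ k ∈ A, phaseFac (alphaAngle n θ k x) (x k) (y k) else 0

/-- The test operator `Ω(𝒜) = (1/m) ∑_l P_l`. -/
noncomputable def OmegaA (n m : ℕ) (θ : Fin n → Fin n → ℝ) (A : Fin m → Finset (Fin n)) :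
    QOp n :=
  (m : ℂ)⁻¹ • ∑ l, Pop n θ (A l)

/-- The discretized projection `P_{l;h}` (replace `α_k(z)` by `α_k^h(z)`). -/
noncomputable def PopH (n : ℕ) (θ : Fin n → Fin n → ℝ) (h : ℕ) (A : Finset (Fin n)) : QOp n :=
  Matrix.of fun x y =>
    if ∀ j ∉ A, x j = y j then
      ∏ k ∈ A, phaseFac (alphaH h (alphaAngle n θ k x)) (x k) (y k) else 0

/-- The discretized test operator `Ω_h(𝒜) = (1/m) ∑_l P_{l;h}`. -/
noncomputable def OmegaAH (n m : ℕ) (θ : Fin n → Fin n → ℝ) (h : ℕ)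
    (A : Fin m → Finset (Fin n)) : QOp n :=
  (m : ℂ)⁻¹ • ∑ l, PopH n θ h (A l)

/-- Entry of the single-site operator `(1/h) |α⟩⟨α| + (1 - 1/h) I`. -/
noncomputable def mixFac (h : ℕ) (α : ℝ) (b b' : Fin 2) : ℂ :=
  (1 - (h : ℂ)⁻¹) * (if b = b' then 1 else 0) + (h : ℂ)⁻¹ * phaseFac α b b'

/-- `P̄_l = ∏_{k ∈ A_l} ((1/h(k)) Q_k + (1 - 1/h(k)) I)`, written out entrywise. -/
noncomputable def PBar (n : ℕ) (θ : Fin n → Fin n → ℝ) (hf : Fin n → ℕ) (A : Finset (Fin n)) :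
    QOp n :=
  Matrix.of fun x y =>
    if ∀ j ∉ A, x j = y j then ∏ k ∈ A, mixFac (hf k) (alphaAngle n θ k x) (x k) (y k) else 0

/-- `Ω̄(𝒜)_𝐡 = (1/m) ∑_l P̄_l`. -/
noncomputable def OmegaBar (n m : ℕ) (θ : Fin n → Fin n → ℝ) (hf : Fin n → ℕ)
    (A : Fin m → Finset (Fin n)) : QOp n :=
  (m : ℂ)⁻¹ • ∑ l, PBar n θ hf (A l)

/-- `P̄_{l;h} = ∏_{k ∈ A_l} ((1/h) Q_{k;h} + (1 - 1/h) I)`, written out entrywise. -/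
noncomputable def PBarH (n : ℕ) (θ : Fin n → Fin n → ℝ) (h : ℕ) (A : Finset (Fin n)) : QOp n :=
  Matrix.of fun x y =>
    if ∀ j ∉ A, x j = y j then
      ∏ k ∈ A, mixFac h (alphaH h (alphaAngle n θ k x)) (x k) (y k) else 0

/-- `Ω̄_h(𝒜) = (1/m) ∑_l P̄_{l;h}`. -/
noncomputable def OmegaBarH (n m : ℕ) (θ : Fin n → Fin n → ℝ) (h : ℕ)
    (A : Fin m → Finset (Fin n)) : QOp n :=
  (m : ℂ)⁻¹ • ∑ l, PBarH n θ h (A l)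

/-- Index set for `N+1` copies of the `n`-qubit space. -/
abbrev BIdx (n N : ℕ) := Fin (N + 1) → QIdx n

/-- `(⊗_{j ≠ i} Ω) ⊗ I_i` acting on the `N+1` copies. -/
noncomputable def testAll (n N : ℕ) (Ω : QOp n) (i : Fin (N + 1)) :
    Matrix (BIdx n N) (BIdx n N) ℂ :=
  Matrix.of fun x y =>
    (if x i = y i then 1 else 0) * ∏ j ∈ Finset.univ.erase i, Ω (x j) (y j)

/-- Acceptance probability `p = (1/(N+1)) ∑_i Tr[((⊗_{j≠i} Ω) ⊗ I_i) ρ]` of the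
`N`-random sampling test of `Ω` on a state `ρ` of `N+1` copies. -/
noncomputable def acceptProb (n N : ℕ) (Ω : QOp n) (ρ : Matrix (BIdx n N) (BIdx n N) ℂ) : ℝ :=
  (((N : ℂ) + 1)⁻¹ * ∑ i, (testAll n N Ω i * ρ).trace).re

/-- Partial trace over all copies except copy `i`. -/
noncomputable def ptraceAt (n N : ℕ) (i : Fin (N + 1))
    (M : Matrix (BIdx n N) (BIdx n N) ℂ) : QOp n :=
  Matrix.of fun a b => ∑ x : BIdx n N, if x i = a then M x (Function.update x i b) else 0

/-- The conditional state of the remaining copy given that the test is passed: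
`σ = (1/((N+1)p)) ∑_i Tr_{j≠i}[((⊗_{j≠i} Ω) ⊗ I_i) ρ]`. -/
noncomputable def condState (n N : ℕ) (Ω : QOp n) (ρ : Matrix (BIdx n N) (BIdx n N) ℂ) :
    QOp n :=
  (((((N : ℝ) + 1) * acceptProb n N Ω ρ : ℝ) : ℂ))⁻¹ •
    ∑ i, ptraceAt n N i (testAll n N Ω i * ρ)

/-- The i.i.d. state `(|G⟩⟨G|)^{⊗(N+1)}`. -/
noncomputable def iidState (n N : ℕ) (θ : Fin n → Fin n → ℝ) :
    Matrix (BIdx n N) (BIdx n N) ℂ :=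
  Matrix.of fun x y => ∏ j, gVec n θ (x j) * star (gVec n θ (y j))


lemma bR0 : bR 0 = 0 := by simp [bR]
lemma bR1 : bR 1 = 1 := by simp [bR]

lemma sum_phaseFac (α : ℝ) :
    ∑ b : Fin 2, ∑ b' : Fin 2, phaseFac α b b' = ((1 + Real.cos α : ℝ) : ℂ) := by
  simp only [Fin.sum_univ_two, phaseFac, bR0, bR1]
  have e1 : Complex.exp (Complex.I * ((α * (0 - 1) : ℝ) : ℂ)) = Complex.exp (-(α * I)) := by
    congr 1; push_cast; ring
  have e2 : Complex.exp (Complex.I * ((α * (1 - 0) : ℝ) : ℂ)) = Complex.exp (α * I) := by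
    congr 1; push_cast; ring
  rw [e1, e2]
  have hc : ((Real.cos α : ℝ) : ℂ) = Complex.cos α := Complex.ofReal_cos α
  rw [Complex.ofReal_add, hc, Complex.cos]
  norm_num
  ring

lemma abs_sub_alphaH (h : ℕ) (hh : 1 ≤ h) (α : ℝ) :
    |α - alphaH h α| ≤ Real.pi / (2 * h) := by
  have hπ : (0:ℝ) < Real.pi := Real.pi_pos
  have hh0 : (0:ℝ) < h := by exact_mod_cast hh
  set j : ℤ := ⌊(h : ℝ) * α / Real.pi + 1 / 2⌋ with hj
  have halpha : alphaH h α = (j:ℝ) * Real.pi / h := rfl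
  have h1 : (j : ℝ) ≤ (h : ℝ) * α / Real.pi + 1/2 := Int.floor_le _
  have h2 : (h : ℝ) * α / Real.pi + 1/2 < j + 1 := Int.lt_floor_add_one _
  have e : α - alphaH h α = ((h:ℝ) * α / Real.pi - j) * (Real.pi / h) := by
    rw [halpha]; field_simp
  rw [e, abs_mul, abs_of_pos (by positivity : (0:ℝ) < Real.pi / h)]
  have hb : |(h:ℝ) * α / Real.pi - j| ≤ 1/2 := by
    rw [abs_le]; constructor <;> linarith
  calc |(h:ℝ) * α / Real.pi - j| * (Real.pi / h) ≤ (1/2) * (Real.pi / h) :=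
        mul_le_mul_of_nonneg_right hb (by positivity)
    _ = Real.pi / (2 * h) := by ring

lemma factor_bound (h : ℕ) (hh : 1 ≤ h) (α : ℝ) :
    2 * (1 - Real.sin (Real.pi / (4 * h)) ^ 2) ≤ 1 + Real.cos (α - alphaH h α) := by
  have hπ : (0:ℝ) < Real.pi := Real.pi_pos
  have hh0 : (0:ℝ) < h := by exact_mod_cast hh
  have hh1 : (1:ℝ) ≤ h := by exact_mod_cast hh
  have hd := abs_sub_alphaH h hh α
  have hb : Real.pi / (2 * h) ≤ Real.pi := by
    rw [div_le_iff₀ (by positivity)]; nlinarith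
  have hcos : Real.cos (Real.pi / (2 * h)) ≤ Real.cos (α - alphaH h α) := by
    rw [← Real.cos_abs (α - alphaH h α)]
    exact Real.cos_le_cos_of_nonneg_of_le_pi (abs_nonneg _) hb hd
  have hid : Real.cos (Real.pi / (2 * h)) = 1 - 2 * Real.sin (Real.pi / (4 * h)) ^ 2 := by
    have e : Real.pi / (2 * h) = 2 * (Real.pi / (4 * h)) := by ring
    rw [e, Real.cos_two_mul, ← Real.sin_sq_add_cos_sq (Real.pi / (4 * h))]; ring
  nlinarith
lemma phase_diff (n : ℕ) (θ : Fin n → Fin n → ℝ) (hsym : ∀ j k, θ j k = θ k j)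
    (A : Finset (Fin n)) (hA0 : ∀ j ∈ A, ∀ k ∈ A, θ j k = 0)
    (x y : QIdx n) (hxy : ∀ j ∉ A, x j = y j) :
    1 / 2 * (∑ j, ∑ k, θ j k * bR (y j) * bR (y k))
      - 1 / 2 * (∑ j, ∑ k, θ j k * bR (x j) * bR (x k))
    = ∑ k ∈ A, alphaAngle n θ k x * (bR (y k) - bR (x k)) := by
  have hD : ∀ k, k ∉ A → bR (y k) - bR (x k) = 0 := by
    intro k hk; rw [hxy k hk]; ring
  set a : Fin n → Fin n → ℝ := fun j k => θ j k * bR (x j) * (bR (y k) - bR (x k)) with ha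
  set b : Fin n → Fin n → ℝ := fun j k => θ j k * bR (y k) * (bR (y j) - bR (x j)) with hb
  have swap : ∑ j, ∑ k, b j k = ∑ j, ∑ k, θ j k * bR (y j) * (bR (y k) - bR (x k)) := by
    rw [Finset.sum_comm]
    exact Finset.sum_congr rfl fun j _ => Finset.sum_congr rfl fun k _ => by
      simp only [hb]; rw [hsym k j]
  have point : ∀ j k : Fin n,
      a j k + θ j k * bR (y j) * (bR (y k) - bR (x k)) = 2 * a j k := by
    intro j k
    simp only [ha]
    by_cases hk : k ∈ A
    · by_cases hj : j ∈ A
      · rw [hA0 j hj k hk]; ring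
      · rw [hxy j hj]; ring
    · rw [hD k hk]; ring
  have main : (∑ j, ∑ k, θ j k * bR (y j) * bR (y k))
      - (∑ j, ∑ k, θ j k * bR (x j) * bR (x k)) = 2 * ∑ j, ∑ k, a j k := by
    calc (∑ j, ∑ k, θ j k * bR (y j) * bR (y k))
          - (∑ j, ∑ k, θ j k * bR (x j) * bR (x k))
        = ∑ j, ∑ k, (θ j k * bR (y j) * bR (y k) - θ j k * bR (x j) * bR (x k)) := by
          rw [← Finset.sum_sub_distrib]
          exact Finset.sum_congr rfl fun j _ => (Finset.sum_sub_distrib _ _).symm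
      _ = ∑ j, ∑ k, (a j k + b j k) := by
          exact Finset.sum_congr rfl fun j _ => Finset.sum_congr rfl fun k _ => by
            simp only [ha, hb]; ring
      _ = (∑ j, ∑ k, a j k) + ∑ j, ∑ k, b j k := by
          calc ∑ j, ∑ k, (a j k + b j k)
              = ∑ j, ((∑ k, a j k) + ∑ k, b j k) :=
                Finset.sum_congr rfl fun j _ => Finset.sum_add_distrib
            _ = _ := Finset.sum_add_distrib
      _ = ∑ j, ∑ k, (a j k + θ j k * bR (y j) * (bR (y k) - bR (x k))) := by
          rw [swap]
          calc (∑ j, ∑ k, a j k) + ∑ j, ∑ k, θ j k * bR (y j) * (bR (y k) - bR (x k))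
              = ∑ j, ((∑ k, a j k) + ∑ k, θ j k * bR (y j) * (bR (y k) - bR (x k))) :=
                Finset.sum_add_distrib.symm
            _ = _ := Finset.sum_congr rfl fun j _ => Finset.sum_add_distrib.symm
      _ = ∑ j, ∑ k, 2 * a j k :=
          Finset.sum_congr rfl fun j _ => Finset.sum_congr rfl fun k _ => point j k
      _ = 2 * ∑ j, ∑ k, a j k := by
          rw [Finset.mul_sum]
          exact Finset.sum_congr rfl fun j _ => (Finset.mul_sum _ _ _).symm
  have goal2 : ∑ j, ∑ k, a j k = ∑ k ∈ A, alphaAngle n θ k x * (bR (y k) - bR (x k)) := by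
    rw [Finset.sum_comm]
    rw [← Finset.sum_subset (Finset.subset_univ A) (by
      intro k _ hk
      calc ∑ j, a j k = ∑ j, (0:ℝ) := Finset.sum_congr rfl fun j _ => by
            simp only [ha]; rw [hD k hk]; ring
        _ = 0 := by simp)]
    exact Finset.sum_congr rfl fun k _ => by
      simp only [ha, alphaAngle, Finset.sum_mul]
  calc 1 / 2 * (∑ j, ∑ k, θ j k * bR (y j) * bR (y k))
      - 1 / 2 * (∑ j, ∑ k, θ j k * bR (x j) * bR (x k))
      = 1 / 2 * ((∑ j, ∑ k, θ j k * bR (y j) * bR (y k))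
          - (∑ j, ∑ k, θ j k * bR (x j) * bR (x k))) := by ring
    _ = 1 / 2 * (2 * ∑ j, ∑ k, a j k) := by rw [main]
    _ = ∑ j, ∑ k, a j k := by ring
    _ = _ := goal2

lemma gMul (n : ℕ) (θ : Fin n → Fin n → ℝ) (hsym : ∀ j k, θ j k = θ k j)
    (A : Finset (Fin n)) (hA0 : ∀ j ∈ A, ∀ k ∈ A, θ j k = 0)
    (x y : QIdx n) (hxy : ∀ j ∉ A, x j = y j) :
    (starRingEnd ℂ) (gVec n θ x) * gVec n θ y
    = (((2:ℝ) ^ n)⁻¹ : ℝ) *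
        Complex.exp (Complex.I *
          ((∑ k ∈ A, alphaAngle n θ k x * (bR (y k) - bR (x k)) : ℝ) : ℂ)) := by
  have hr : ((Real.sqrt (2 ^ n))⁻¹ : ℝ) * ((Real.sqrt (2 ^ n))⁻¹ : ℝ) = ((2:ℝ) ^ n)⁻¹ := by
    rw [← mul_inv, Real.mul_self_sqrt (by positivity)]
  have gen : ∀ u v : ℝ,
      (((Real.sqrt (2 ^ n))⁻¹ : ℝ) : ℂ) * Complex.exp (-(Complex.I * (u : ℂ)))
        * ((((Real.sqrt (2 ^ n))⁻¹ : ℝ) : ℂ) * Complex.exp (Complex.I * (v : ℂ)))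
      = ((((2:ℝ) ^ n)⁻¹ : ℝ) : ℂ) * Complex.exp (Complex.I * ((v - u : ℝ) : ℂ)) := by
    intro u v
    rw [Complex.ofReal_sub,
      show Complex.I * ((v:ℂ) - u) = Complex.I * v + -(Complex.I * u) by ring,
      Complex.exp_add, ← hr]
    push_cast
    ring
  simp only [gVec]
  simp only [_root_.map_mul, Complex.conj_ofReal, ← Complex.exp_conj, Complex.conj_I, neg_mul]
  rw [gen, phase_diff n θ hsym A hA0 x y hxy]

lemma combineFac (α β : ℝ) (b b' : Fin 2) :
    Complex.exp (Complex.I * ((α * (bR b' - bR b) : ℝ) : ℂ)) * phaseFac β b b'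
    = phaseFac (β - α) b b' := by
  rw [phaseFac, phaseFac,
    show Complex.exp (Complex.I * ((α * (bR b' - bR b) : ℝ) : ℂ)) *
        ((1 / 2 : ℂ) * Complex.exp (Complex.I * ((β * (bR b - bR b') : ℝ) : ℂ)))
      = (1 / 2 : ℂ) * (Complex.exp (Complex.I * ((α * (bR b' - bR b) : ℝ) : ℂ)) *
          Complex.exp (Complex.I * ((β * (bR b - bR b') : ℝ) : ℂ))) from by ring,
    ← Complex.exp_add]
  congr 2
  push_cast
  ring

lemma summand_eq (n : ℕ) (θ : Fin n → Fin n → ℝ) (hsym : ∀ j k, θ j k = θ k j)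
    (A : Finset (Fin n)) (hA0 : ∀ j ∈ A, ∀ k ∈ A, θ j k = 0)
    (h : ℕ) (x y : QIdx n) :
    (starRingEnd ℂ) (gVec n θ x) * gVec n θ y * PopH n θ h A x y
    = if ∀ j ∉ A, x j = y j then
        ((((2:ℝ) ^ n)⁻¹ : ℝ) : ℂ) *
          ∏ k ∈ A, phaseFac (alphaH h (alphaAngle n θ k x) - alphaAngle n θ k x) (x k) (y k)
      else 0 := by
  rw [PopH]
  simp only [Matrix.of_apply]
  split_ifs with hcond
  · rw [show (starRingEnd ℂ) (gVec n θ x) * gVec n θ y *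
        ∏ k ∈ A, phaseFac (alphaH h (alphaAngle n θ k x)) (x k) (y k)
      = ((starRingEnd ℂ) (gVec n θ x) * gVec n θ y) *
        ∏ k ∈ A, phaseFac (alphaH h (alphaAngle n θ k x)) (x k) (y k) from by ring]
    rw [gMul n θ hsym A hA0 x y hcond]
    rw [mul_assoc]
    congr 1
    calc Complex.exp (Complex.I * ((∑ k ∈ A, alphaAngle n θ k x * (bR (y k) - bR (x k)) : ℝ) : ℂ))
          * ∏ k ∈ A, phaseFac (alphaH h (alphaAngle n θ k x)) (x k) (y k)
        = (∏ k ∈ A, Complex.exp (Complex.I * ((alphaAngle n θ k x * (bR (y k) - bR (x k)) : ℝ) : ℂ)))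
          * ∏ k ∈ A, phaseFac (alphaH h (alphaAngle n θ k x)) (x k) (y k) := by
          rw [Complex.ofReal_sum, Finset.mul_sum, Complex.exp_sum]
      _ = ∏ k ∈ A, (Complex.exp (Complex.I * ((alphaAngle n θ k x * (bR (y k) - bR (x k)) : ℝ) : ℂ))
            * phaseFac (alphaH h (alphaAngle n θ k x)) (x k) (y k)) := by
          rw [Finset.prod_mul_distrib]
      _ = _ := Finset.prod_congr rfl fun k _ => combineFac _ _ _ _
  · rw [mul_zero]

noncomputable def betaW (n : ℕ) (θ : Fin n → Fin n → ℝ) (A : Finset (Fin n))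
    (w : {x : Fin n // ¬ x ∈ A} → Fin 2) (k : Fin n) : ℝ :=
  ∑ j, if hj : j ∈ A then 0 else θ j k * bR (w ⟨j, hj⟩)

section reindex
variable {n : ℕ} {A : Finset (Fin n)}

lemma esymm_mem (a : {x : Fin n // x ∈ A} → Fin 2) (w : {x : Fin n // ¬ x ∈ A} → Fin 2)
    {k : Fin n} (hk : k ∈ A) :
    (Equiv.piEquivPiSubtypeProd (fun x : Fin n => x ∈ A) (fun _ => Fin 2)).symm (a, w) k
      = a ⟨k, hk⟩ := by
  rw [Equiv.piEquivPiSubtypeProd_symm_apply, dif_pos hk]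

lemma esymm_not (a : {x : Fin n // x ∈ A} → Fin 2) (w : {x : Fin n // ¬ x ∈ A} → Fin 2)
    {j : Fin n} (hj : ¬ j ∈ A) :
    (Equiv.piEquivPiSubtypeProd (fun x : Fin n => x ∈ A) (fun _ => Fin 2)).symm (a, w) j
      = w ⟨j, hj⟩ := by
  rw [Equiv.piEquivPiSubtypeProd_symm_apply, dif_neg hj]

lemma alpha_esymm (θ : Fin n → Fin n → ℝ) (hA0 : ∀ j ∈ A, ∀ k ∈ A, θ j k = 0)
    (a : {x : Fin n // x ∈ A} → Fin 2) (w : {x : Fin n // ¬ x ∈ A} → Fin 2)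
    {k : Fin n} (hk : k ∈ A) :
    alphaAngle n θ k ((Equiv.piEquivPiSubtypeProd (fun x : Fin n => x ∈ A) (fun _ => Fin 2)).symm (a, w))
      = betaW n θ A w k := by
  rw [alphaAngle, betaW]
  refine Finset.sum_congr rfl fun j _ => ?_
  by_cases hj : j ∈ A
  · rw [dif_pos hj, hA0 j hj k hk]; ring
  · rw [dif_neg hj, esymm_not a w hj]

end reindex

set_option maxHeartbeats 2000000 in
lemma popH_bound (n : ℕ) (θ : Fin n → Fin n → ℝ) (hsym : ∀ j k, θ j k = θ k j)
    (A : Finset (Fin n)) (hA0 : ∀ j ∈ A, ∀ k ∈ A, θ j k = 0)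
    (h : ℕ) (hh : 1 ≤ h) :
    ∃ r : ℝ,
      star (gVec n θ) ⬝ᵥ (PopH n θ h A *ᵥ gVec n θ) = (r : ℂ) ∧
      (1 - Real.sin (Real.pi / (4 * h)) ^ 2) ^ A.card ≤ r := by
  classical
  set c : ℝ := 1 - Real.sin (Real.pi / (4 * h)) ^ 2 with hcdef
  have hc0 : 0 ≤ c := by rw [hcdef]; nlinarith [Real.sin_sq_le_one (Real.pi / (4 * (h:ℝ)))]
  set e := Equiv.piEquivPiSubtypeProd (fun x : Fin n => x ∈ A) (fun _ => Fin 2) with he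
  set F : QIdx n → QIdx n → ℂ := fun x y =>
    if ∀ j ∉ A, x j = y j then
      ((((2:ℝ) ^ n)⁻¹ : ℝ) : ℂ) *
        ∏ k ∈ A, phaseFac (alphaH h (alphaAngle n θ k x) - alphaAngle n θ k x) (x k) (y k)
    else 0 with hF
  -- step 1: expand the quadratic form
  have expand : star (gVec n θ) ⬝ᵥ (PopH n θ h A *ᵥ gVec n θ)
      = ∑ x : QIdx n, ∑ y : QIdx n, F x y := by
    simp only [dotProduct, Matrix.mulVec, Pi.star_apply, RCLike.star_def, Finset.mul_sum]
    refine Finset.sum_congr rfl fun x _ => Finset.sum_congr rfl fun y _ => ?_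
    simp only [hF]
    rw [← summand_eq n θ hsym A hA0 h x y]
    ring
  -- step 2: the collapsed form of F after reindexing
  have Fcollapse : ∀ (a a' : {x : Fin n // x ∈ A} → Fin 2)
      (w w' : {x : Fin n // ¬ x ∈ A} → Fin 2),
      F (e.symm (a, w)) (e.symm (a', w'))
      = if w' = w then
          ((((2:ℝ) ^ n)⁻¹ : ℝ) : ℂ) *
            ∏ k ∈ A.attach,
              phaseFac (alphaH h (betaW n θ A w k.1) - betaW n θ A w k.1) (a k) (a' k)
        else 0 := by
    intro a a' w w'
    simp only [hF]
    have hcond : (∀ j ∉ A, (e.symm (a, w)) j = (e.symm (a', w')) j) ↔ w' = w := by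
      constructor
      · intro hc
        funext j
        have := hc j.1 j.2
        rw [esymm_not a w j.2, esymm_not a' w' j.2] at this
        simp only [Subtype.coe_eta] at this
        exact this.symm
      · intro hc j hj
        rw [esymm_not a w hj, esymm_not a' w' hj, hc]
    rw [if_congr hcond rfl rfl]
    by_cases hw : w' = w
    · rw [if_pos hw, if_pos hw]
      congr 1
      rw [← Finset.prod_attach A (fun k =>
        phaseFac (alphaH h (alphaAngle n θ k (e.symm (a, w))) - alphaAngle n θ k (e.symm (a, w)))
          ((e.symm (a, w)) k) ((e.symm (a', w')) k))]
      refine Finset.prod_congr rfl fun k _ => ?_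
      rw [alpha_esymm θ hA0 a w k.2, esymm_mem a w k.2, esymm_mem a' w' k.2]
      all_goals simp only [Subtype.coe_eta]
    · rw [if_neg hw, if_neg hw]
  -- step 3: compute the double sum
  have key : ∑ x : QIdx n, ∑ y : QIdx n, F x y
      = ∑ w : {x : Fin n // ¬ x ∈ A} → Fin 2,
          ((((2:ℝ) ^ n)⁻¹ : ℝ) : ℂ) *
            ∏ k ∈ A.attach,
              ((1 + Real.cos (alphaH h (betaW n θ A w k.1) - betaW n θ A w k.1) : ℝ) : ℂ) := by
    calc ∑ x : QIdx n, ∑ y : QIdx n, F x y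
        = ∑ p, ∑ q, F (e.symm p) (e.symm q) := by
          refine (Equiv.sum_comp e.symm (fun x => ∑ y : QIdx n, F x y)).symm.trans ?_
          exact Finset.sum_congr rfl fun p _ =>
            (Equiv.sum_comp e.symm (fun y => F (e.symm p) y)).symm
      _ = ∑ a : {x : Fin n // x ∈ A} → Fin 2, ∑ w : {x : Fin n // ¬ x ∈ A} → Fin 2,
            ∑ a' : {x : Fin n // x ∈ A} → Fin 2, ∑ w' : {x : Fin n // ¬ x ∈ A} → Fin 2,
            F (e.symm (a, w)) (e.symm (a', w')) := by
          simp only [Fintype.sum_prod_type]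
      _ = ∑ a : {x : Fin n // x ∈ A} → Fin 2, ∑ w : {x : Fin n // ¬ x ∈ A} → Fin 2,
            ∑ a' : {x : Fin n // x ∈ A} → Fin 2, ((((2:ℝ) ^ n)⁻¹ : ℝ) : ℂ) *
            ∏ k ∈ A.attach,
              phaseFac (alphaH h (betaW n θ A w k.1) - betaW n θ A w k.1) (a k) (a' k) := by
          refine Finset.sum_congr rfl fun a _ => Finset.sum_congr rfl fun w _ =>
            Finset.sum_congr rfl fun a' _ => ?_
          simp only [Fcollapse]
          rw [Finset.sum_ite_eq' Finset.univ w]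
          simp
      _ = ∑ w, ((((2:ℝ) ^ n)⁻¹ : ℝ) : ℂ) *
            ∏ k ∈ A.attach,
              ((1 + Real.cos (alphaH h (betaW n θ A w k.1) - betaW n θ A w k.1) : ℝ) : ℂ) := by
          rw [Finset.sum_comm]
          refine Finset.sum_congr rfl fun w _ => ?_
          have fact : ∀ G : {x : Fin n // x ∈ A} → Fin 2 → ℂ,
              (∑ a : {x : Fin n // x ∈ A} → Fin 2, ∏ k, G k (a k)) = ∏ k, ∑ b, G k b := by
            intro G
            have := Finset.prod_univ_sum
              (fun _ : {x : Fin n // x ∈ A} => (Finset.univ : Finset (Fin 2))) (fun k b => G k b)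
            rw [Fintype.piFinset_univ] at this
            exact this.symm
          simp only [← Finset.univ_eq_attach]
          simp only [← Finset.mul_sum]
          congr 1
          calc ∑ a : {x : Fin n // x ∈ A} → Fin 2, ∑ a' : {x : Fin n // x ∈ A} → Fin 2,
                ∏ k, phaseFac (alphaH h (betaW n θ A w k.1) - betaW n θ A w k.1) (a k) (a' k)
              = ∑ a : {x : Fin n // x ∈ A} → Fin 2, ∏ k, ∑ b',
                  phaseFac (alphaH h (betaW n θ A w k.1) - betaW n θ A w k.1) (a k) b' :=
                Finset.sum_congr rfl fun a _ => fact _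
            _ = ∏ k : {x : Fin n // x ∈ A}, ∑ b, ∑ b',
                  phaseFac (alphaH h (betaW n θ A w k.1) - betaW n θ A w k.1) b b' :=
                fact (fun k b => ∑ b' : Fin 2,
                  phaseFac (alphaH h (betaW n θ A w k.1) - betaW n θ A w k.1) b b')
            _ = _ := Finset.prod_congr rfl fun k _ => sum_phaseFac _
  -- step 4: realify and bound
  set r : ℝ := ∑ w : {x : Fin n // ¬ x ∈ A} → Fin 2,
      ((2:ℝ) ^ n)⁻¹ *
        ∏ k ∈ A.attach, (1 + Real.cos (alphaH h (betaW n θ A w k.1) - betaW n θ A w k.1))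
    with hrdef
  refine ⟨r, ?_, ?_⟩
  · rw [expand, key, hrdef]
    push_cast
    rfl
  · -- the bound
    have hcard : A.card ≤ n := by simpa using Finset.card_le_univ A
    have hbound : ∀ w : {x : Fin n // ¬ x ∈ A} → Fin 2,
        (2*c)^A.card ≤ ∏ k ∈ A.attach,
          (1 + Real.cos (alphaH h (betaW n θ A w k.1) - betaW n θ A w k.1)) := by
      intro w
      calc (2*c)^A.card = ∏ _k ∈ A.attach, (2*c) := by
            rw [Finset.prod_const, Finset.card_attach]
        _ ≤ _ := by
            refine Finset.prod_le_prod (fun _ _ => by linarith) (fun k _ => ?_)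
            have hfb := factor_bound h hh (betaW n θ A w k.1)
            rwa [show betaW n θ A w k.1 - alphaH h (betaW n θ A w k.1)
                = -(alphaH h (betaW n θ A w k.1) - betaW n θ A w k.1) from by ring,
              Real.cos_neg] at hfb
    have hcardW : (Fintype.card ({x : Fin n // ¬ x ∈ A} → Fin 2)) = 2 ^ (n - A.card) := by
      rw [Fintype.card_fun]
      congr 1
      rw [Fintype.card_subtype_compl]
      simp [Fintype.card_coe]
    have hsum : (2:ℝ) ^ (n - A.card) * (((2:ℝ)^n)⁻¹ * (2*c)^A.card) ≤ r := by
      rw [hrdef]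
      calc (2:ℝ) ^ (n - A.card) * (((2:ℝ)^n)⁻¹ * (2*c)^A.card)
          = ∑ _w : {x : Fin n // ¬ x ∈ A} → Fin 2, ((2:ℝ)^n)⁻¹ * (2*c)^A.card := by
            rw [Finset.sum_const, Finset.card_univ, hcardW, nsmul_eq_mul]
            push_cast
            ring
        _ ≤ _ := Finset.sum_le_sum fun w _ =>
            mul_le_mul_of_nonneg_left (hbound w) (by positivity)
    have harith : (2:ℝ) ^ (n - A.card) * (((2:ℝ)^n)⁻¹ * (2*c)^A.card) = c ^ A.card := by
      have h2 : (2:ℝ)^(n - A.card) * (2:ℝ)^A.card = 2^n := by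
        rw [← pow_add, Nat.sub_add_cancel hcard]
      rw [mul_pow]
      calc (2:ℝ) ^ (n - A.card) * (((2:ℝ)^n)⁻¹ * ((2:ℝ)^A.card * c^A.card))
          = ((2:ℝ)^(n - A.card) * (2:ℝ)^A.card) * c^A.card * ((2:ℝ)^n)⁻¹ := by ring
        _ = (2:ℝ)^n * c^A.card * ((2:ℝ)^n)⁻¹ := by rw [h2]
        _ = c^A.card := by
            rw [mul_comm ((2:ℝ)^n) (c^A.card), mul_assoc,
              mul_inv_cancel₀ (by positivity), mul_one]
    rw [← hcdef] at *
    rw [← harith]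
    exact hsum


theorem gVec_OmegaAH_lower_bound
    (n m : ℕ) (hn : 1 ≤ n) (hm : 1 ≤ m)
    (G : SimpleGraph (Fin n)) (θ : Fin n → Fin n → ℝ)
    (hsym : ∀ j k, θ j k = θ k j)
    (hθ : ∀ j k, ¬ G.Adj j k → θ j k = 0)
    (A : Fin m → Finset (Fin n))
    (hdisj : ∀ l l', l ≠ l' → Disjoint (A l) (A l'))
    (hcover : ∀ v : Fin n, ∃ l, v ∈ A l)
    (hne : ∀ l, (A l).Nonempty)
    (hind : ∀ l, ∀ j ∈ A l, ∀ k ∈ A l, ¬ G.Adj j k)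
    (h : ℕ) (hh : 1 ≤ h) :
    (1 - Real.sin (Real.pi / (4 * h)) ^ 2) ^ (Finset.univ.sup fun l => (A l).card) ≤
      (star (gVec n θ) ⬝ᵥ (OmegaAH n m θ h A *ᵥ gVec n θ)).re := by
  classical
  set c : ℝ := 1 - Real.sin (Real.pi / (4 * h)) ^ 2 with hcdef
  have hc0 : 0 ≤ c := by rw [hcdef]; nlinarith [Real.sin_sq_le_one (Real.pi / (4 * (h:ℝ)))]
  have hc1 : c ≤ 1 := by rw [hcdef]; nlinarith [sq_nonneg (Real.sin (Real.pi / (4 * (h:ℝ))))]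
  have hm0 : (0:ℝ) < m := by exact_mod_cast hm
  -- per-l bounds
  have hA0 : ∀ l, ∀ j ∈ A l, ∀ k ∈ A l, θ j k = 0 := fun l j hj k hk =>
    hθ j k (hind l j hj k hk)
  choose r hr1 hr2 using fun l => popH_bound n θ hsym (A l) (hA0 l) h hh
  -- split the quadratic form
  have split : star (gVec n θ) ⬝ᵥ (OmegaAH n m θ h A *ᵥ gVec n θ)
      = (m : ℂ)⁻¹ * ∑ l, star (gVec n θ) ⬝ᵥ (PopH n θ h (A l) *ᵥ gVec n θ) := by
    rw [OmegaAH, Matrix.smul_mulVec, dotProduct_smul, smul_eq_mul]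
    congr 1
    have hmv : (∑ l, PopH n θ h (A l)) *ᵥ gVec n θ
        = ∑ l, PopH n θ h (A l) *ᵥ gVec n θ := by
      ext x
      simp only [Matrix.mulVec, dotProduct, Matrix.sum_apply, Finset.sum_apply,
        Finset.sum_mul]
      rw [Finset.sum_comm]
    rw [hmv]
    simp only [dotProduct, Finset.sum_apply, Finset.mul_sum]
    rw [Finset.sum_comm]
  -- rewrite as a real number
  have hre : star (gVec n θ) ⬝ᵥ (OmegaAH n m θ h A *ᵥ gVec n θ)
      = (((m:ℝ)⁻¹ * ∑ l, r l : ℝ) : ℂ) := by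
    rw [split, Finset.sum_congr rfl fun l _ => hr1 l, ← Complex.ofReal_sum]
    push_cast
    ring
  rw [hre, Complex.ofReal_re]
  -- bound
  have hsum : (m:ℝ) * c ^ (Finset.univ.sup fun l => (A l).card) ≤ ∑ l, r l := by
    calc (m:ℝ) * c ^ (Finset.univ.sup fun l => (A l).card)
        = ∑ _l : Fin m, c ^ (Finset.univ.sup fun l => (A l).card) := by
          rw [Finset.sum_const, Finset.card_univ, Fintype.card_fin, nsmul_eq_mul]
      _ ≤ ∑ l, r l := by
          refine Finset.sum_le_sum fun l _ => le_trans ?_ (hr2 l)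
          exact pow_le_pow_of_le_one hc0 hc1
            (Finset.le_sup (f := fun l => (A l).card) (Finset.mem_univ l))
  calc c ^ (Finset.univ.sup fun l => (A l).card)
      = (m:ℝ)⁻¹ * ((m:ℝ) * c ^ (Finset.univ.sup fun l => (A l).card)) := by
        field_simp
    _ ≤ (m:ℝ)⁻¹ * ∑ l, r l := by
        exact mul_le_mul_of_nonneg_left hsum (by positivity)

end
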